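/- Let Z be an exponential random variable with mean one, and let h : [0,∞) → R be absolutely continuous with ‖h'‖_∞ < ∞ (i.e. h is Lipschitz with constant ‖h'‖_∞). Define, for w > 0, f(w) = −(e^w / w)·∫_w^∞ (h(x) − E h(Z))·e^{−x} dx. Then sup_{w>0} |f(w)| ≤ (1 + 2/e)·‖h'‖_∞ and sup_{w>0} |f'(w)| ≤ 2·‖h'‖_∞. -/

import Mathlib

open MeasureTheory Set

/-- The mean of `h` under the exponential distribution with mean one,
`E h(Z) = ∫₀^∞ h(x) e^{-x} dx`. -/
noncomputable def expMean (h : ℝ → ℝ) : ℝ := ∫ x in Set.Ioi (0 : ℝ), h x * Real.exp (-x)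

/-- The solution of the Stein equation for the exponential distribution:
`f(w) = -(e^w / w) · ∫_w^∞ (h(x) - E h(Z)) e^{-x} dx`. -/
noncomputable def steinSol (h : ℝ → ℝ) (w : ℝ) : ℝ :=
  -(Real.exp w / w) * ∫ x in Set.Ioi w, (h x - expMean h) * Real.exp (-x)

section SteinAux
open intervalIntegral Real Filter Topology

lemma m_nonneg {x : ℝ} (hx : 0 ≤ x) : 0 ≤ x - 1 + 2*rexp (-x) := by
  have h1 := Real.add_one_le_exp (-x)
  have h2 := Real.exp_pos (-x)
  linarith

lemma intOn_exp (c : ℝ) : IntegrableOn (fun x : ℝ => rexp (-x)) (Ioi c) := by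
  simpa using exp_neg_integrableOn_Ioi c (by norm_num : (0:ℝ) < 1)

lemma intOn_exp2 (c : ℝ) : IntegrableOn (fun x : ℝ => rexp (-(2*x))) (Ioi c) := by
  simpa [neg_mul] using exp_neg_integrableOn_Ioi c (by norm_num : (0:ℝ) < 2)

lemma intOn_xexp {c : ℝ} (hc : 0 ≤ c) : IntegrableOn (fun x : ℝ => x * rexp (-x)) (Ioi c) := by
  have h0 : IntegrableOn (fun x : ℝ => x * rexp (-x)) (Ioi 0) := by
    have := Real.GammaIntegral_convergent (by norm_num : (0:ℝ) < 2)
    refine this.congr_fun ?_ measurableSet_Ioi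
    intro x hx
    simp only [show (2:ℝ) - 1 = 1 by norm_num, Real.rpow_one]; ring
  exact h0.mono_set (Ioi_subset_Ioi hc)
-- antiderivative of (x-1+2e^{-x})e^{-x}
lemma hasDeriv_Phi (x : ℝ) :
    HasDerivAt (fun y : ℝ => -(y * rexp (-y)) - rexp (-(2*y)))
      ((x - 1 + 2*rexp (-x)) * rexp (-x)) x := by
  have h1 : HasDerivAt (fun y : ℝ => rexp (-y)) (-rexp (-x)) x := by
    simpa using ((hasDerivAt_id x).neg).exp
  have h2 : HasDerivAt (fun y : ℝ => y * rexp (-y)) (rexp (-x) + x * -rexp (-x)) x := by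
    exact ((hasDerivAt_id x).mul h1).congr_deriv (by simp)
  have h3 : HasDerivAt (fun y : ℝ => rexp (-(2*y))) (-(2 * rexp (-(2*x)))) x := by
    have := (((hasDerivAt_id x).const_mul (2:ℝ)).neg).exp
    simpa [mul_comm] using this
  have := (h2.neg).sub h3
  refine this.congr_deriv ?_
  rw [show -(2*x) = -x + -x by ring, Real.exp_add]; ring

lemma tendsto_Phi : Tendsto (fun y : ℝ => -(y * rexp (-y)) - rexp (-(2*y))) atTop (𝓝 0) := by
  have h1 : Tendsto (fun y : ℝ => y * rexp (-y)) atTop (𝓝 0) := by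
    simpa using tendsto_pow_mul_exp_neg_atTop_nhds_zero 1
  have h2 : Tendsto (fun y : ℝ => rexp (-(2*y))) atTop (𝓝 0) := by
    refine Real.tendsto_exp_atBot.comp ?_
    exact tendsto_neg_atBot_iff.mpr ((tendsto_id.const_mul_atTop (by norm_num : (0:ℝ) < 2)))
  simpa using (h1.neg).sub h2
lemma cont_m : Continuous (fun x : ℝ => (x - 1 + 2*rexp (-x)) * rexp (-x)) := by fun_prop

lemma intOn_m {w : ℝ} (hw : 0 ≤ w) :
    IntegrableOn (fun x : ℝ => (x - 1 + 2*rexp (-x)) * rexp (-x)) (Ioi w) := by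
  have : (fun x : ℝ => (x - 1 + 2*rexp (-x)) * rexp (-x))
      = fun x : ℝ => x * rexp (-x) - rexp (-x) + 2 * rexp (-(2*x)) := by
    funext x; rw [show -(2*x) = -x + -x by ring, Real.exp_add]; ring
  rw [this]
  exact (((intOn_xexp hw).sub (intOn_exp w)).add ((intOn_exp2 w).const_mul 2))

lemma integral_m_Ioc {w : ℝ} :
    ∫ x in (0:ℝ)..w, (x - 1 + 2*rexp (-x)) * rexp (-x)
      = 1 - rexp (-(2*w)) - w * rexp (-w) := by
  have := integral_eq_sub_of_hasDerivAt (f := fun y : ℝ => -(y * rexp (-y)) - rexp (-(2*y)))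
    (fun x _ => hasDeriv_Phi x) (cont_m.intervalIntegrable 0 w)
  rw [this]; simp; ring

lemma integral_m_Ioi {w : ℝ} (hw : 0 ≤ w) :
    ∫ x in Ioi w, (x - 1 + 2*rexp (-x)) * rexp (-x)
      = w * rexp (-w) + rexp (-(2*w)) := by
  have := integral_Ioi_of_hasDerivAt_of_tendsto' (a := w)
    (fun x _ => hasDeriv_Phi x) (intOn_m hw) tendsto_Phi
  rw [this]; ring
-- C: ∫_0^w (w-x)e^{-x} dx = w - 1 + e^{-w}
lemma integral_wsub {w : ℝ} :
    ∫ x in (0:ℝ)..w, (w - x) * rexp (-x) = w - 1 + rexp (-w) := by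
  have hF : ∀ x : ℝ, HasDerivAt (fun y : ℝ => (y - w + 1) * rexp (-y)) ((w - x) * rexp (-x)) x := by
    intro x
    have h1 : HasDerivAt (fun y : ℝ => rexp (-y)) (-rexp (-x)) x := by
      simpa using ((hasDerivAt_id x).neg).exp
    have h2 : HasDerivAt (fun y : ℝ => y - w + 1) 1 x := by
      simpa using ((hasDerivAt_id x).sub_const w).add_const 1
    have := h2.mul h1
    exact this.congr_deriv (by ring)
  have := integral_eq_sub_of_hasDerivAt (fun x _ => hF x)
    ((by fun_prop : Continuous fun x : ℝ => (w - x) * rexp (-x)).intervalIntegrable 0 w)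
  rw [this]; simp; ring

-- D: ∫_{Ioi a} (t-a)e^{-t} dt = e^{-a}
lemma integral_sub_Ioi {a : ℝ} (ha : 0 ≤ a) :
    ∫ t in Ioi a, (t - a) * rexp (-t) = rexp (-a) := by
  have hF : ∀ x : ℝ, HasDerivAt (fun y : ℝ => -((y - a + 1) * rexp (-y))) ((x - a) * rexp (-x)) x := by
    intro x
    have h1 : HasDerivAt (fun y : ℝ => rexp (-y)) (-rexp (-x)) x := by
      simpa using ((hasDerivAt_id x).neg).exp
    have h2 : HasDerivAt (fun y : ℝ => y - a + 1) 1 x := by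
      simpa using ((hasDerivAt_id x).sub_const a).add_const 1
    have := (h2.mul h1).neg
    exact this.congr_deriv (by ring)
  have hint : IntegrableOn (fun t : ℝ => (t - a) * rexp (-t)) (Ioi a) := by
    have : (fun t : ℝ => (t - a) * rexp (-t)) = fun t : ℝ => t * rexp (-t) - a * rexp (-t) := by
      funext t; ring
    rw [this]
    exact (intOn_xexp ha).sub ((intOn_exp a).const_mul a)
  have htend : Tendsto (fun y : ℝ => -((y - a + 1) * rexp (-y))) atTop (𝓝 0) := by
    have h1 : Tendsto (fun y : ℝ => y * rexp (-y)) atTop (𝓝 0) := by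
      simpa using tendsto_pow_mul_exp_neg_atTop_nhds_zero 1
    have h2 : Tendsto (fun y : ℝ => rexp (-y)) atTop (𝓝 0) := tendsto_exp_neg_atTop_nhds_zero
    have : Tendsto (fun y : ℝ => -(y * rexp (-y) - a * rexp (-y) + rexp (-y))) atTop (𝓝 (-(0 - a*0 + 0))) :=
      ((h1.sub (h2.const_mul a)).add h2).neg
    simpa [sub_mul, add_mul] using this.congr (fun y => by ring)
  have := integral_Ioi_of_hasDerivAt_of_tendsto' (a := a) (fun x _ => hF x) hint htend
  rw [this]; simp

-- E: absolute first moment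
lemma integral_abs_moment {a : ℝ} (ha : 0 ≤ a) :
    ∫ t in Ioi (0:ℝ), |a - t| * rexp (-t) = a - 1 + 2 * rexp (-a) := by
  have hsplit : Ioc (0:ℝ) a ∪ Ioi a = Ioi 0 := Ioc_union_Ioi_eq_Ioi ha
  have hd : Disjoint (Ioc (0:ℝ) a) (Ioi a) := Ioc_disjoint_Ioi le_rfl
  have hi1 : IntegrableOn (fun t : ℝ => |a - t| * rexp (-t)) (Ioc 0 a) := by
    exact (by fun_prop : Continuous fun t : ℝ => |a - t| * rexp (-t)).integrableOn_Ioc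
  have hi2 : IntegrableOn (fun t : ℝ => |a - t| * rexp (-t)) (Ioi a) := by
    have heq : EqOn (fun t : ℝ => |a - t| * rexp (-t)) (fun t : ℝ => (t - a) * rexp (-t)) (Ioi a) := by
      intro t ht
      simp only
      rw [abs_of_nonpos (by simp at ht; linarith)]; ring
    have : (fun t : ℝ => (t - a) * rexp (-t)) = fun t : ℝ => t * rexp (-t) - a * rexp (-t) := by
      funext t; ring
    refine IntegrableOn.congr_fun ?_ heq.symm measurableSet_Ioi
    rw [this]
    exact (intOn_xexp ha).sub ((intOn_exp a).const_mul a)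
  rw [← hsplit, setIntegral_union hd measurableSet_Ioi hi1 hi2]
  have e1 : ∫ t in Ioc (0:ℝ) a, |a - t| * rexp (-t) = a - 1 + rexp (-a) := by
    rw [← intervalIntegral.integral_of_le ha]
    rw [← integral_wsub (w := a)]
    apply intervalIntegral.integral_congr
    intro t ht
    rw [uIcc_of_le ha] at ht
    simp only
    rw [abs_of_nonneg (by linarith [ht.2])]
  have e2 : ∫ t in Ioi a, |a - t| * rexp (-t) = rexp (-a) := by
    rw [← integral_sub_Ioi ha]
    apply setIntegral_congr_fun measurableSet_Ioi
    intro t ht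
    simp only
    rw [abs_of_nonpos (by simp at ht; linarith)]; ring
  rw [e1, e2]; ring
variable {h : ℝ → ℝ} {L : ℝ}

lemma cont_h (hL : 0 ≤ L) (hLip : ∀ x y : ℝ, |h x - h y| ≤ L * |x - y|) : Continuous h := by
  have : LipschitzWith (Real.toNNReal L) h := by
    apply LipschitzWith.of_dist_le_mul
    intro x y
    simpa [Real.dist_eq, Real.coe_toNNReal L hL] using hLip x y
  exact this.continuous

lemma intOn_absm {a : ℝ} (ha : 0 ≤ a) :
    IntegrableOn (fun t : ℝ => |a - t| * rexp (-t)) (Ioi 0) := by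
  have hg : IntegrableOn (fun t : ℝ => a * rexp (-t) + t * rexp (-t)) (Ioi 0) :=
    ((intOn_exp 0).const_mul a).add (intOn_xexp le_rfl)
  refine hg.integrable.mono
    ((by fun_prop : Continuous fun t : ℝ => |a - t| * rexp (-t)).aestronglyMeasurable) ?_
  filter_upwards [ae_restrict_mem measurableSet_Ioi] with t ht
  have ht' : (0:ℝ) < t := ht
  have h1 : |a - t| ≤ a + t := by
    rw [abs_sub_le_iff]; constructor <;> linarith
  have h2 : (0:ℝ) < rexp (-t) := exp_pos _
  have h4 : 0 ≤ a * rexp (-t) + t * rexp (-t) := by nlinarith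
  rw [Real.norm_eq_abs, Real.norm_eq_abs, abs_mul, abs_of_pos h2, abs_abs,
    abs_of_nonneg h4]
  nlinarith [abs_nonneg (a - t)]

lemma intOn_hexp (hL : 0 ≤ L) (hLip : ∀ x y : ℝ, |h x - h y| ≤ L * |x - y|) :
    IntegrableOn (fun x : ℝ => h x * rexp (-x)) (Ioi 0) := by
  have hg : IntegrableOn (fun t : ℝ => |h 0| * rexp (-t) + L * (t * rexp (-t))) (Ioi 0) :=
    ((intOn_exp 0).const_mul _).add ((intOn_xexp le_rfl).const_mul L)
  refine hg.integrable.mono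
    (((cont_h hL hLip).mul (by fun_prop : Continuous fun x : ℝ => rexp (-x))).aestronglyMeasurable) ?_
  filter_upwards [ae_restrict_mem measurableSet_Ioi] with t ht
  have ht' : (0:ℝ) < t := ht
  have h2 : (0:ℝ) < rexp (-t) := exp_pos _
  have h3 : |h t| ≤ |h 0| + L * t := by
    have hl := hLip t 0
    rw [sub_zero, abs_of_pos ht'] at hl
    have ha := abs_add_le (h t - h 0) (h 0)
    simp only [sub_add_cancel] at ha
    linarith
  have h4 : 0 ≤ |h 0| * rexp (-t) + L * (t * rexp (-t)) := by positivity
  rw [Real.norm_eq_abs, Real.norm_eq_abs, abs_mul, abs_of_pos h2, abs_of_nonneg h4]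
  nlinarith [abs_nonneg (h t), abs_le.mp h3]

lemma intOn_gexp (hL : 0 ≤ L) (hLip : ∀ x y : ℝ, |h x - h y| ≤ L * |x - y|) :
    IntegrableOn (fun x : ℝ => (h x - expMean h) * rexp (-x)) (Ioi 0) := by
  have : (fun x : ℝ => (h x - expMean h) * rexp (-x))
      = fun x : ℝ => h x * rexp (-x) - expMean h * rexp (-x) := by funext x; ring
  rw [this]
  exact (intOn_hexp hL hLip).sub ((intOn_exp 0).const_mul _)

lemma integral_g_total (hL : 0 ≤ L) (hLip : ∀ x y : ℝ, |h x - h y| ≤ L * |x - y|) :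
    ∫ x in Ioi (0:ℝ), (h x - expMean h) * rexp (-x) = 0 := by
  have : (fun x : ℝ => (h x - expMean h) * rexp (-x))
      = fun x : ℝ => h x * rexp (-x) - expMean h * rexp (-x) := by funext x; ring
  rw [this, integral_sub (intOn_hexp hL hLip) ((intOn_exp 0).const_mul _),
    MeasureTheory.integral_const_mul, integral_exp_neg_Ioi_zero]
  simp [expMean]

lemma g_abs_le (hL : 0 ≤ L) (hLip : ∀ x y : ℝ, |h x - h y| ≤ L * |x - y|)
    {a : ℝ} (ha : 0 ≤ a) :
    |h a - expMean h| ≤ L * (a - 1 + 2 * rexp (-a)) := by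
  have hrep : h a - expMean h = ∫ t in Ioi (0:ℝ), (h a - h t) * rexp (-t) := by
    have : (fun t : ℝ => (h a - h t) * rexp (-t))
        = fun t : ℝ => h a * rexp (-t) - h t * rexp (-t) := by funext t; ring
    rw [this, integral_sub ((intOn_exp 0).const_mul _) (intOn_hexp hL hLip),
      MeasureTheory.integral_const_mul, integral_exp_neg_Ioi_zero]
    simp [expMean]
  rw [hrep, ← integral_abs_moment ha, ← MeasureTheory.integral_const_mul]
  rw [show |∫ t in Ioi (0:ℝ), (h a - h t) * rexp (-t)|
      = ‖∫ t in Ioi (0:ℝ), (h a - h t) * rexp (-t)‖ from (Real.norm_eq_abs _).symm]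
  refine norm_integral_le_of_norm_le ((intOn_absm ha).const_mul L) ?_
  filter_upwards [ae_restrict_mem measurableSet_Ioi] with t _
  rw [Real.norm_eq_abs, abs_mul, abs_of_pos (exp_pos _)]
  have := hLip a t
  have h2 : (0:ℝ) < rexp (-t) := exp_pos _
  nlinarith [abs_nonneg (a - t)]
variable {h : ℝ → ℝ} {L : ℝ}

lemma J_neg (hL : 0 ≤ L) (hLip : ∀ x y : ℝ, |h x - h y| ≤ L * |x - y|) {w : ℝ} (hw : 0 < w) :
    ∫ x in (0:ℝ)..w, (h x - expMean h) * rexp (-x)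
      = - ∫ x in Ioi w, (h x - expMean h) * rexp (-x) := by
  have hIoc : IntegrableOn (fun x : ℝ => (h x - expMean h) * rexp (-x)) (Ioc 0 w) :=
    (intOn_gexp hL hLip).mono_set Ioc_subset_Ioi_self
  have hIoi : IntegrableOn (fun x : ℝ => (h x - expMean h) * rexp (-x)) (Ioi w) :=
    (intOn_gexp hL hLip).mono_set (Ioi_subset_Ioi hw.le)
  have hsplit := setIntegral_union (Ioc_disjoint_Ioi le_rfl) measurableSet_Ioi hIoc hIoi
    (f := fun x : ℝ => (h x - expMean h) * rexp (-x)) (μ := volume)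
  rw [Ioc_union_Ioi_eq_Ioi hw.le, integral_g_total hL hLip] at hsplit
  rw [intervalIntegral.integral_of_le hw.le]
  linarith

lemma steinSol_eq (hL : 0 ≤ L) (hLip : ∀ x y : ℝ, |h x - h y| ≤ L * |x - y|) {w : ℝ} (hw : 0 < w) :
    steinSol h w = (rexp w / w) * ∫ x in (0:ℝ)..w, (h x - expMean h) * rexp (-x) := by
  rw [steinSol, J_neg hL hLip hw]; ring

lemma J_bound_small (hL : 0 ≤ L) (hLip : ∀ x y : ℝ, |h x - h y| ≤ L * |x - y|)
    {w : ℝ} (hw : 0 ≤ w) :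
    |∫ x in (0:ℝ)..w, (h x - expMean h) * rexp (-x)|
      ≤ L * (1 - rexp (-(2*w)) - w * rexp (-w)) := by
  rw [← integral_m_Ioc (w := w), intervalIntegral.integral_of_le hw,
    intervalIntegral.integral_of_le hw, ← MeasureTheory.integral_const_mul,
    show |∫ x in Ioc (0:ℝ) w, (h x - expMean h) * rexp (-x)|
      = ‖∫ x in Ioc (0:ℝ) w, (h x - expMean h) * rexp (-x)‖ from (Real.norm_eq_abs _).symm]
  refine norm_integral_le_of_norm_le ?_ ?_
  · exact ((continuous_const.mul cont_m).integrableOn_Ioc)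
  · filter_upwards [ae_restrict_mem measurableSet_Ioc] with x hx
    have hx0 : (0:ℝ) ≤ x := hx.1.le
    have hg := g_abs_le hL hLip hx0
    have he : (0:ℝ) < rexp (-x) := exp_pos _
    rw [Real.norm_eq_abs, abs_mul, abs_of_pos he]
    nlinarith [m_nonneg hx0]

lemma J_bound_large (hL : 0 ≤ L) (hLip : ∀ x y : ℝ, |h x - h y| ≤ L * |x - y|)
    {w : ℝ} (hw : 0 < w) :
    |∫ x in (0:ℝ)..w, (h x - expMean h) * rexp (-x)|
      ≤ L * (w * rexp (-w) + rexp (-(2*w))) := by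
  rw [J_neg hL hLip hw, abs_neg, ← integral_m_Ioi hw.le, ← MeasureTheory.integral_const_mul,
    show |∫ x in Ioi w, (h x - expMean h) * rexp (-x)|
      = ‖∫ x in Ioi w, (h x - expMean h) * rexp (-x)‖ from (Real.norm_eq_abs _).symm]
  refine norm_integral_le_of_norm_le ((intOn_m hw.le).const_mul L) ?_
  filter_upwards [ae_restrict_mem measurableSet_Ioi] with x hx
  have hx0 : (0:ℝ) ≤ x := (hw.trans hx).le
  have hg := g_abs_le hL hLip hx0
  have he : (0:ℝ) < rexp (-x) := exp_pos _
  rw [Real.norm_eq_abs, abs_mul, abs_of_pos he]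
  nlinarith [m_nonneg hx0]

lemma integral_expneg {w : ℝ} : ∫ x in (0:ℝ)..w, rexp (-x) = 1 - rexp (-w) := by
  have hF : ∀ x : ℝ, HasDerivAt (fun y : ℝ => -rexp (-y)) (rexp (-x)) x := by
    intro x
    exact (((hasDerivAt_id x).neg).exp).neg.congr_deriv (by simp)
  have := integral_eq_sub_of_hasDerivAt (fun x _ => hF x)
    ((by fun_prop : Continuous fun x : ℝ => rexp (-x)).intervalIntegrable 0 w)
  rw [this]; simp; ring

lemma J_split (hL : 0 ≤ L) (hLip : ∀ x y : ℝ, |h x - h y| ≤ L * |x - y|)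
    {w : ℝ} (hw : 0 ≤ w) :
    |(∫ x in (0:ℝ)..w, (h x - expMean h) * rexp (-x))
        - (h w - expMean h) * (1 - rexp (-w))|
      ≤ L * (w - 1 + rexp (-w)) := by
  have hcont : Continuous (fun x : ℝ => (h x - expMean h) * rexp (-x)) := by
    have := cont_h hL hLip; fun_prop
  have hrep : (∫ x in (0:ℝ)..w, (h x - expMean h) * rexp (-x))
      - (h w - expMean h) * (1 - rexp (-w))
      = ∫ x in (0:ℝ)..w, (h x - h w) * rexp (-x) := by
    rw [← integral_expneg (w := w), ← intervalIntegral.integral_const_mul,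
      ← intervalIntegral.integral_sub (hcont.intervalIntegrable 0 w)
        (((by fun_prop : Continuous fun x : ℝ => rexp (-x)).intervalIntegrable 0 w).const_mul _)]
    congr 1; funext x; ring
  rw [hrep, ← integral_wsub (w := w), intervalIntegral.integral_of_le hw,
    intervalIntegral.integral_of_le hw,
    show |∫ x in Ioc (0:ℝ) w, (h x - h w) * rexp (-x)|
      = ‖∫ x in Ioc (0:ℝ) w, (h x - h w) * rexp (-x)‖ from (Real.norm_eq_abs _).symm,
    ← MeasureTheory.integral_const_mul]
  refine norm_integral_le_of_norm_le ?_ ?_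
  · exact (continuous_const.mul (by fun_prop : Continuous fun x : ℝ => (w - x) * rexp (-x))).integrableOn_Ioc
  · filter_upwards [ae_restrict_mem measurableSet_Ioc] with x hx
    have he : (0:ℝ) < rexp (-x) := exp_pos _
    have hd := hLip x w
    rw [abs_of_nonpos (by linarith [hx.2] : x - w ≤ 0)] at hd
    rw [Real.norm_eq_abs, abs_mul, abs_of_pos he]
    nlinarith [abs_nonneg (h x - h w)]
lemma exp_line {w : ℝ} (h0 : 0 ≤ w) (h1 : w ≤ 1) : rexp w ≤ 1 - w + w * rexp 1 := by
  have := convexOn_exp.2 (mem_univ (0:ℝ)) (mem_univ (1:ℝ))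
    (by linarith : (0:ℝ) ≤ 1 - w) h0 (by ring)
  simp only [smul_eq_mul, mul_zero, mul_one, zero_add, Real.exp_zero] at this
  linarith

lemma exp_neg_line {w : ℝ} (h0 : 0 ≤ w) (h1 : w ≤ 1) : rexp (-w) ≤ 1 - w + w * rexp (-1) := by
  have := convexOn_exp.2 (mem_univ (0:ℝ)) (mem_univ (-1:ℝ))
    (by linarith : (0:ℝ) ≤ 1 - w) h0 (by ring)
  simp only [smul_eq_mul, mul_zero, mul_neg, mul_one, zero_add, Real.exp_zero] at this
  linarith

lemma exp_neg_quad {w : ℝ} (h0 : 0 ≤ w) (h1 : w ≤ 1) : rexp (-w) ≤ 1 - w + (3/4) * w^2 := by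
  have hb := Real.exp_bound (x := -w) (by rwa [abs_neg, abs_of_nonneg h0]) (by norm_num : 0 < 2)
  have hs : ∑ i ∈ Finset.range 2, (-w)^i / (Nat.factorial i) = 1 - w := by
    simp [Finset.sum_range_succ]; ring
  rw [hs, abs_neg, abs_of_nonneg h0] at hb
  have := (abs_le.mp hb).2
  norm_num at this ⊢
  linarith
lemma steinSol_hasDerivAt {h : ℝ → ℝ} {L : ℝ} (hL : 0 ≤ L)
    (hLip : ∀ x y : ℝ, |h x - h y| ≤ L * |x - y|) {w : ℝ} (hw : 0 < w) :
    HasDerivAt (steinSol h)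
      ((rexp w * (w - 1) / w^2) * (∫ x in (0:ℝ)..w, (h x - expMean h) * rexp (-x))
        + (h w - expMean h) / w) w := by
  have hgc : Continuous (fun x : ℝ => (h x - expMean h) * rexp (-x)) := by
    have := cont_h hL hLip; fun_prop
  have hJ : HasDerivAt (fun u : ℝ => ∫ x in (0:ℝ)..u, (h x - expMean h) * rexp (-x))
      ((h w - expMean h) * rexp (-w)) w :=
    intervalIntegral.integral_hasDerivAt_right (hgc.intervalIntegrable 0 w)
      (hgc.stronglyMeasurableAtFilter _ _) hgc.continuousAt
  have hq : HasDerivAt (fun u : ℝ => rexp u / u) ((rexp w * w - rexp w * 1) / w^2) w :=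
    (Real.hasDerivAt_exp w).div (hasDerivAt_id w) (ne_of_gt hw)
  have hmul := hq.mul hJ
  have heq : steinSol h =ᶠ[𝓝 w]
      (fun u : ℝ => (rexp u / u) * ∫ x in (0:ℝ)..u, (h x - expMean h) * rexp (-x)) := by
    filter_upwards [Ioi_mem_nhds hw] with u hu
    exact steinSol_eq hL hLip hu
  refine (HasDerivAt.congr_of_eventuallyEq ?_ heq)
  refine hmul.congr_deriv ?_
  symm
  have hexp : rexp w * rexp (-w) = 1 := by rw [← Real.exp_add]; simp
  field_simp
  linear_combination (-w * (h w - expMean h)) * hexp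

set_option maxHeartbeats 2000000 in
/-- if `h` is Lipschitz with constant `L = ‖h'‖_∞`, then the Stein
solution satisfies `sup_{w>0} |f(w)| ≤ (1 + 2/e) L` and `sup_{w>0} |f'(w)| ≤ 2 L`. -/
theorem steinSol_bounds (h : ℝ → ℝ) (L : ℝ) (hL : 0 ≤ L)
    (hLip : ∀ x y : ℝ, |h x - h y| ≤ L * |x - y|) :
    ∀ w : ℝ, 0 < w →
      |steinSol h w| ≤ (1 + 2 / Real.exp 1) * L ∧
      ∃ f' : ℝ, HasDerivAt (steinSol h) f' w ∧ |f'| ≤ 2 * L := by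
  intro w hw
  have hE1 : (2.7182818283 : ℝ) < rexp 1 := Real.exp_one_gt_d9
  have hE2 : rexp 1 < 2.7182818286 := Real.exp_one_lt_d9
  set a := rexp w with ha
  set b := rexp (-w) with hb
  have hab : a * b = 1 := by rw [ha, hb, ← Real.exp_add]; simp
  have hb2 : rexp (-(2*w)) = b^2 := by rw [hb, sq, ← Real.exp_add]; ring_nf
  have hapos : 0 < a := exp_pos _
  have hbpos : 0 < b := exp_pos _
  set J := ∫ x in (0:ℝ)..w, (h x - expMean h) * rexp (-x) with hJdef
  have hb1 : 1 - w ≤ b := by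
    have := Real.add_one_le_exp (-w); rw [← hb] at this; linarith
  have ha1 : 1 + w ≤ a := by
    have := Real.add_one_le_exp w; rw [← ha] at this; linarith
  have hEpos : (0:ℝ) < rexp 1 := exp_pos 1
  have hEinv : rexp (-1) * rexp 1 = 1 := by rw [← Real.exp_add]; simp
  have hEhalf : rexp (-1) < 1/2 := by nlinarith [exp_pos (-1)]
  have hE21 : rexp 1 - 1 ≤ 1 + 2 / rexp 1 := by
    have h2E : 2 / rexp 1 * rexp 1 = 2 := div_mul_cancel₀ 2 (ne_of_gt hEpos)
    nlinarith
  constructor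
  · -- sup bound
    rw [steinSol_eq hL hLip hw, ← hJdef, abs_mul, abs_of_pos (div_pos hapos hw)]
    rcases le_or_gt w 1 with hw1 | hw1
    · have hJb := J_bound_small hL hLip hw.le
      rw [hb2, ← hb] at hJb
      have haE : a ≤ 1 - w + w * rexp 1 := exp_line hw.le hw1
      have key : a - b ≤ rexp 1 * w := by nlinarith
      have hJabs : |J| ≤ L * (1 - b^2 - w * b) := hJb
      clear_value a b J
      have hstep : a / w * |J| ≤ a / w * (L * (1 - b^2 - w * b)) :=
        mul_le_mul_of_nonneg_left hJabs (by positivity)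
      refine hstep.trans ?_
      rw [div_mul_eq_mul_div, div_le_iff₀ hw]
      have h2E : 2 / rexp 1 * rexp 1 = 2 := div_mul_cancel₀ 2 (ne_of_gt hEpos)
      -- a * (L*(1-b²-wb)) = L*(a - b - w) using ab=1
      have hid : a * (L * (1 - b^2 - w * b)) = L * (a - b - w) := by
        linear_combination (-(L*b + L*w)) * hab
      rw [hid]
      have h1 : L * (a - b - w) ≤ L * ((rexp 1 - 1) * w) := by nlinarith
      have h3 := mul_le_mul_of_nonneg_left hE21 (mul_nonneg hL hw.le)
      nlinarith [h1, h3]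
    · have hJb := J_bound_large hL hLip hw
      rw [hb2, ← hb, ← hJdef] at hJb
      have hble : b ≤ rexp (-1) := by
        rw [hb]; exact Real.exp_le_exp.mpr (by linarith)
      have hbe : b * rexp 1 ≤ 1 := by nlinarith [exp_pos (-1)]
      clear_value a b J
      have hstep : a / w * |J| ≤ a / w * (L * (w * b + b^2)) :=
        mul_le_mul_of_nonneg_left hJb (by positivity)
      refine hstep.trans ?_
      rw [div_mul_eq_mul_div, div_le_iff₀ hw]
      have hid : a * (L * (w * b + b^2)) = L * (w + b) := by
        linear_combination (L*w + L*b) * hab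
      rw [hid]
      have h2 : b ≤ 2 / rexp 1 * w := by
        rw [div_mul_eq_mul_div, le_div_iff₀ hEpos]; nlinarith
      nlinarith [mul_nonneg hL hw.le, mul_le_mul_of_nonneg_left h2 hL]
  · refine ⟨_, steinSol_hasDerivAt hL hLip hw, ?_⟩
    rw [← hJdef, ← ha]
    set gw := h w - expMean h with hgw
    have hgwb := g_abs_le hL hLip hw.le
    rw [← hb, ← hgw] at hgwb
    rcases le_or_gt w 1 with hw1 | hw1
    · -- small w
      set R := J - gw * (1 - b) with hR
      have hRb := J_split hL hLip hw.le
      rw [← hb, ← hgw, ← hJdef, ← hR] at hRb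
      have hmle : w - 1 + 2*b ≤ 1 := by
        have h3 := exp_neg_line hw.le hw1
        rw [← hb] at h3
        have h7 : 0 ≤ w * (1/2 - rexp (-1)) := mul_nonneg hw.le (by linarith)
        nlinarith [h3, h7]
      have hq5 : b ≤ 1 - w + (3/4) * w^2 := by
        have h5 := exp_neg_quad hw.le hw1
        rw [← hb] at h5; exact h5
      clear_value a b J gw
      have hw2 : (0:ℝ) < w^2 := by positivity
      have hDeq : a * (w - 1) / w^2 * J + gw / w
          = gw * ((w + (w-1)*(a-1))/w^2) + ((w-1)*a/w^2) * R := by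
        rw [hR]; field_simp; linear_combination (gw*(1 - w)) * hab
      rw [hDeq]
      have h1wa : (1 - w) * a ≤ 1 := by nlinarith
      have hK1 : 0 ≤ w + (w-1)*(a-1) := by nlinarith
      have hK2 : w + (w-1)*(a-1) ≤ w^2 := by nlinarith
      have hmge : 0 ≤ w - 1 + 2*b := by nlinarith
      have hRq : |R| ≤ L * ((3/4) * w^2) := by
        refine hRb.trans ?_
        nlinarith [hq5, mul_le_mul_of_nonneg_left hq5 hL]
      have hgL : |gw| ≤ L := by
        refine hgwb.trans ?_
        nlinarith [mul_le_mul_of_nonneg_left hmle hL]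
      have hT1 : |gw * ((w + (w-1)*(a-1))/w^2)| ≤ L := by
        rw [abs_mul, abs_of_nonneg (div_nonneg hK1 hw2.le)]
        have hd1 : (w + (w-1)*(a-1))/w^2 ≤ 1 := by rw [div_le_one hw2]; linarith
        calc |gw| * ((w + (w-1)*(a-1))/w^2) ≤ L * 1 :=
              mul_le_mul hgL hd1 (div_nonneg hK1 hw2.le) hL
          _ = L := mul_one L
      have hT2 : |((w-1)*a/w^2) * R| ≤ (3/4) * L := by
        rw [abs_mul, abs_div, abs_mul, abs_of_nonpos (by linarith : w - 1 ≤ 0),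
          abs_of_pos hapos, abs_of_pos hw2, neg_sub]
        have hc : 0 ≤ (1 - w) * a / w^2 :=
          div_nonneg (mul_nonneg (by linarith) hapos.le) hw2.le
        calc (1-w)*a/w^2 * |R| ≤ (1-w)*a/w^2 * (L * ((3/4)*w^2)) :=
              mul_le_mul_of_nonneg_left hRq hc
          _ ≤ (3/4) * L := by
              rw [div_mul_eq_mul_div, div_le_iff₀ hw2]
              nlinarith [mul_le_mul_of_nonneg_right h1wa (mul_nonneg hL hw2.le)]
      calc |gw * ((w + (w-1)*(a-1))/w^2) + ((w-1)*a/w^2) * R|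
          ≤ |gw * ((w + (w-1)*(a-1))/w^2)| + |((w-1)*a/w^2) * R| := abs_add_le _ _
        _ ≤ L + (3/4) * L := add_le_add hT1 hT2
        _ ≤ 2 * L := by linarith
    · -- large w
      have hJb := J_bound_large hL hLip hw
      rw [hb2, ← hb, ← hJdef] at hJb
      have hbe : b * rexp 1 ≤ 1 := by
        have hble : b ≤ rexp (-1) := by
          rw [hb]; exact Real.exp_le_exp.mpr (by linarith)
        have he : rexp (-1) * rexp 1 = 1 := by rw [← Real.exp_add]; simp
        nlinarith [exp_pos (-1)]
      clear_value a b J gw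
      have hw2 : (0:ℝ) < w^2 := by positivity
      have hwm1 : (0:ℝ) ≤ w - 1 := by linarith
      have hT1 : |a * (w - 1) / w^2 * J| ≤ a * (w-1)/w^2 * (L * (w*b + b^2)) := by
        rw [abs_mul, abs_of_nonneg (by positivity : (0:ℝ) ≤ a * (w-1)/w^2)]
        exact mul_le_mul_of_nonneg_left hJb (by positivity)
      have hT2 : |gw / w| ≤ L * (w - 1 + 2*b) / w := by
        rw [abs_div, abs_of_pos hw]
        gcongr
      have hbh : b < 1/2 := by nlinarith
      calc |a * (w - 1) / w^2 * J + gw / w|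
          ≤ |a * (w - 1) / w^2 * J| + |gw / w| := abs_add_le _ _
        _ ≤ a * (w-1)/w^2 * (L * (w*b + b^2)) + L * (w - 1 + 2*b) / w := add_le_add hT1 hT2
        _ ≤ 2 * L := by
            rw [div_mul_eq_mul_div, div_add_div _ _ (ne_of_gt hw2) (ne_of_gt hw),
              div_le_iff₀ (by positivity)]
            have hids : a * (w-1) * (L * (w*b + b^2)) = L * ((w-1) * (w + b)) := by
              linear_combination (L*(w-1)*w + L*(w-1)*b) * hab
            rw [hids]
            have hkey : b * (3*w - 1) ≤ 2*w := by
              nlinarith [mul_nonneg (by linarith : (0:ℝ) ≤ 1/2 - b)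
                (by linarith : (0:ℝ) ≤ 3*w - 1)]
            have hfin : 0 ≤ L * w * (2*w - b*(3*w-1)) :=
              mul_nonneg (mul_nonneg hL hw.le) (by linarith)
            nlinarith [hfin]

end SteinAux
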